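/- Let A=(S,R) be a finite argumentation network and let λ be a complete extension of A. Then the assignment h_λ (defined by h_λ(x)=(⊤,⊤) if λ(x)=in, h_λ(x)=(⊥,⊥) if λ(x)=out, h_λ(x)=(⊥,⊤) if λ(x)=und) satisfies t ⊨_{h_λ} φ for every formula φ in Δ_A. -/
import Mathlib


/-- The three Caminada labels. -/
inductive Label where
  | in_ : Label
  | out : Label
  | und : Label
deriving DecidableEq

/-- Propositional intuitionistic formulas over atoms `α`, with the
distinguished constant `nconst` (the paper's `n`). -/
inductive Form (α : Type) where
  | atom : α → Form α
  | nconst : Form α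
  | top : Form α
  | bot : Form α
  | and : Form α → Form α → Form α
  | or : Form α → Form α → Form α
  | imp : Form α → Form α → Form α
  | neg : Form α → Form α

/-- Forcing in the two-world Kripke model: world `false` is `t`, world `true`
is `s`, with `t < s` (i.e. the Bool order). `h` assigns to each atom its pair
of truth values (at `t`, at `s`). The constant `n` has value `(⊥,⊤)`. -/
def force {α : Type} (h : α → Bool × Bool) : Bool → Form α → Prop
  | w, .atom x => (if w then (h x).2 else (h x).1) = true
  | w, .nconst => w = true
  | _, .top => True
  | _, .bot => False
  | w, .and A B => force h w A ∧ force h w B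
  | w, .or A B => force h w A ∨ force h w B
  | w, .imp A B => ∀ v : Bool, w ≤ v → force h v A → force h v B
  | w, .neg A => ∀ v : Bool, w ≤ v → ¬ force h v A

/-- An assignment is legitimate when no atom gets the forbidden value `(⊤,⊥)`. -/
def Persistent {α : Type} (h : α → Bool × Bool) : Prop :=
  ∀ x, (h x).1 = true → (h x).2 = true

def bigAnd {α : Type} : List (Form α) → Form α
  | [] => .top
  | f :: fs => .and f (bigAnd fs)

def bigOr {α : Type} : List (Form α) → Form α
  | [] => .bot
  | f :: fs => .or f (bigOr fs)

/-- The list of attackers of `x` in the network `(α, R)`. -/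
noncomputable def attackers {α : Type} [Fintype α] (R : α → α → Prop) [DecidableRel R] (x : α) : List α :=
  (Finset.univ.filter (fun y => R y x)).toList

/-- (a1)  `x → (n ∨ ⋀_{yRx} ¬y)` -/
noncomputable def fa1 {α : Type} [Fintype α] (R : α → α → Prop) [DecidableRel R] (x : α) : Form α :=
  .imp (.atom x) (.or .nconst (bigAnd ((attackers R x).map (fun y => .neg (.atom y)))))

/-- (a2)  `(⋀_{yRx} ¬y) → (n ∨ x)` -/
noncomputable def fa2 {α : Type} [Fintype α] (R : α → α → Prop) [DecidableRel R] (x : α) : Form α :=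
  .imp (bigAnd ((attackers R x).map (fun y => .neg (.atom y)))) (.or .nconst (.atom x))

/-- (b1)  `¬x → (n ∨ ⋁_{yRx} y)` -/
noncomputable def fb1 {α : Type} [Fintype α] (R : α → α → Prop) [DecidableRel R] (x : α) : Form α :=
  .imp (.neg (.atom x)) (.or .nconst (bigOr ((attackers R x).map (fun y => .atom y))))

/-- (b2)  `(⋁_{yRx} y) → (¬x ∨ n)` -/
noncomputable def fb2 {α : Type} [Fintype α] (R : α → α → Prop) [DecidableRel R] (x : α) : Form α :=
  .imp (bigOr ((attackers R x).map (fun y => .atom y))) (.or (.neg (.atom x)) .nconst)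

/-- `h` is a model of the theory `Δ_A`: every formula of `Δ_A` holds at `t`. -/
def ModelsDelta {α : Type} [Fintype α] (h : α → Bool × Bool)
    (R : α → α → Prop) [DecidableRel R] : Prop :=
  ∀ x, force h false (fa1 R x) ∧ force h false (fa2 R x) ∧
    force h false (fb1 R x) ∧ force h false (fb2 R x)

/-- Caminada labelling / complete extension of the network `(α, R)`. -/
def IsCompleteExt {α : Type} (R : α → α → Prop) (l : α → Label) : Prop :=
  (∀ x, l x = .in_ ↔ ∀ y, R y x → l y = .out) ∧
  (∀ x, l x = .out ↔ ∃ y, R y x ∧ l y = .in_) ∧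
  (∀ x, l x = .und ↔ ((∀ y, R y x → l y ≠ .in_) ∧ ∃ y, R y x ∧ l y = .und))

/-- The labelling `λ_h` induced by an assignment `h`. -/
def lamOf {α : Type} (h : α → Bool × Bool) (x : α) : Label :=
  if h x = (true, true) then .in_ else if h x = (false, false) then .out else .und

/-- The assignment `h_λ` induced by a labelling `λ`. -/
def assignOf {α : Type} (l : α → Label) (x : α) : Bool × Bool :=
  match l x with
  | .in_ => (true, true)
  | .out => (false, false)
  | .und => (false, true)

lemma mem_attackers {α : Type} [Fintype α] (R : α → α → Prop) [DecidableRel R]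
    {x y : α} : y ∈ attackers R x ↔ R y x := by
  simp [attackers]

lemma force_bigAnd {α : Type} (h : α → Bool × Bool) (w : Bool) (L : List (Form α)) :
    force h w (bigAnd L) ↔ ∀ f ∈ L, force h w f := by
  induction L with
  | nil => simp [bigAnd, force]
  | cons f fs ih => simp [bigAnd, force, ih]

lemma force_bigOr {α : Type} (h : α → Bool × Bool) (w : Bool) (L : List (Form α)) :
    force h w (bigOr L) ↔ ∃ f ∈ L, force h w f := by
  induction L with
  | nil => simp [bigOr, force]
  | cons f fs ih => simp [bigOr, force, ih]

lemma force_atom_false {α : Type} (l : α → Label) (y : α) :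
    force (assignOf l) false (.atom y) ↔ l y = .in_ := by
  cases hy : l y <;> simp [force, assignOf, hy]

lemma force_neg_atom {α : Type} (l : α → Label) (v : Bool) (y : α) :
    force (assignOf l) v (.neg (.atom y)) ↔ l y = .out := by
  cases v <;> cases hy : l y <;>
    simp [force, assignOf, hy] <;>
    first
    | (intro h; exact absurd (h true (by simp)) (by simp [assignOf, hy]))
    | (intro v hv; cases v <;> simp [assignOf, hy])
    | (exact ⟨true, by simp, by simp [assignOf, hy]⟩)

/-- If `λ` is a complete extension of `A = (S,R)`, then the assignment `h_λ`
satisfies every formula of `Δ_A` at the actual world `t`. -/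
theorem stmt1 {α : Type} [Fintype α] [Nonempty α] (R : α → α → Prop) [DecidableRel R]
    (l : α → Label) (hl : IsCompleteExt R l) :
    ModelsDelta (assignOf l) R := by
  obtain ⟨c1, c2, c3⟩ := hl
  intro x
  refine ⟨?_, ?_, ?_, ?_⟩
  · -- fa1
    intro v _ hx
    cases v with
    | true => left; simp [force]
    | false =>
      right
      rw [force_bigAnd]
      intro f hf
      simp only [List.mem_map] at hf
      obtain ⟨y, hy, rfl⟩ := hf
      rw [force_neg_atom]
      exact (c1 x).mp ((force_atom_false l x).mp hx) y ((mem_attackers R).mp hy)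
  · -- fa2
    intro v _ hA
    cases v with
    | true => left; simp [force]
    | false =>
      right
      rw [force_atom_false]
      rw [force_bigAnd] at hA
      refine (c1 x).mpr (fun y hyx => ?_)
      have := hA (.neg (.atom y)) (by
        simp only [List.mem_map]
        exact ⟨y, (mem_attackers R).mpr hyx, rfl⟩)
      exact (force_neg_atom l false y).mp this
  · -- fb1
    intro v _ hnx
    cases v with
    | true => left; simp [force]
    | false =>
      right
      have hout : l x = .out := (force_neg_atom l false x).mp hnx
      obtain ⟨y, hyx, hy⟩ := (c2 x).mp hout
      rw [force_bigOr]
      refine ⟨.atom y, ?_, (force_atom_false l y).mpr hy⟩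
      simp only [List.mem_map]
      exact ⟨y, (mem_attackers R).mpr hyx, rfl⟩
  · -- fb2
    intro v _ hOr
    cases v with
    | true => right; simp [force]
    | false =>
      left
      rw [force_bigOr] at hOr
      obtain ⟨f, hf, hforce⟩ := hOr
      simp only [List.mem_map] at hf
      obtain ⟨y, hy, rfl⟩ := hf
      have hyin : l y = .in_ := (force_atom_false l y).mp hforce
      have hout : l x = .out := (c2 x).mpr ⟨y, (mem_attackers R).mp hy, hyin⟩
      rw [show (Form.neg (Form.atom x) : Form α) = .neg (.atom x) from rfl]
      intro w _
      cases w <;> simp [force, assignOf, hout]
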